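/- Let Λ be a fixed symmetric n×n real matrix and let k : ℝ → Matrix (Fin n) (Fin n) ℝ satisfy, for every t, the matrix ODE k'(t) = M(k(t)·Λ·k(t)ᵀ)·k(t) (in the sense of HasDerivAt). Then L(t) := k(t)·Λ·k(t)ᵀ satisfies the full symmetric Toda equation: for every t, L'(t) = ⁅M(L(t)), L(t)⁆ (HasDerivAt L at t with value M(L t)·L t − L t·M(L t)). -/

import Mathlib

open Matrix

attribute [local instance] Matrix.normedAddCommGroup Matrix.normedSpace

/-- The Toda projection: `M(A)_{ij} = A_{ij}` for `i < j`, `M(A)_{ij} = -A_{ji}` for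
`i > j`, and `M(A)_{ii} = 0`. -/
def todaProj {n : ℕ} (A : Matrix (Fin n) (Fin n) ℝ) : Matrix (Fin n) (Fin n) ℝ :=
  Matrix.of fun i j => if i < j then A i j else if j < i then -A j i else 0

lemma todaProj_skew {n : ℕ} (A : Matrix (Fin n) (Fin n) ℝ) :
    (todaProj A)ᵀ = -todaProj A := by
  ext i j
  simp only [todaProj, transpose_apply, neg_apply, of_apply]
  rcases lt_trichotomy i j with h | h | h
  · simp [h, h.not_gt]
  · simp [h]
  · simp [h, h.not_gt]

lemma matMulBdd {n : ℕ} : IsBoundedBilinearMap ℝ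
    (fun p : Matrix (Fin n) (Fin n) ℝ × Matrix (Fin n) (Fin n) ℝ => p.1 * p.2) where
  add_left x y z := add_mul x y z
  smul_left c x y := smul_mul_assoc c x y
  add_right x y z := mul_add x y z
  smul_right c x y := mul_smul_comm c x y
  bound := by
    refine ⟨n + 1, by positivity, fun A B => ?_⟩
    rw [Matrix.norm_le_iff (by positivity)]
    intro i j
    calc ‖(A * B) i j‖ = ‖∑ l, A i l * B l j‖ := by rw [Matrix.mul_apply]
      _ ≤ ∑ l, ‖A i l * B l j‖ := norm_sum_le _ _
      _ ≤ ∑ _l : Fin n, ‖A‖ * ‖B‖ := by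
          refine Finset.sum_le_sum fun l _ => ?_
          rw [norm_mul]
          exact mul_le_mul (A.norm_entry_le_entrywise_sup_norm)
            (B.norm_entry_le_entrywise_sup_norm) (norm_nonneg _) (norm_nonneg _)
      _ = n * (‖A‖ * ‖B‖) := by simp [mul_assoc]
      _ ≤ (n + 1) * ‖A‖ * ‖B‖ := by
          rw [mul_assoc]
          gcongr; linarith

lemma hasDerivAt_matmul {n : ℕ} {f g : ℝ → Matrix (Fin n) (Fin n) ℝ}
    {f' g' : Matrix (Fin n) (Fin n) ℝ} {t : ℝ}
    (hf : HasDerivAt f f' t) (hg : HasDerivAt g g' t) :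
    HasDerivAt (fun t => f t * g t) (f' * g t + f t * g') t := by
  have h := (matMulBdd.hasFDerivAt (f t, g t)).comp_hasDerivAt t (hf.prodMk hg)
  simp only [IsBoundedBilinearMap.deriv_apply] at h
  rw [add_comm] at h
  exact h

lemma hasDerivAt_transpose {n : ℕ} {f : ℝ → Matrix (Fin n) (Fin n) ℝ}
    {f' : Matrix (Fin n) (Fin n) ℝ} {t : ℝ} (hf : HasDerivAt f f' t) :
    HasDerivAt (fun t => (f t)ᵀ) f'ᵀ t := by
  let e : Matrix (Fin n) (Fin n) ℝ →L[ℝ] Matrix (Fin n) (Fin n) ℝ :=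
    LinearMap.toContinuousLinearMap
      { toFun := Matrix.transpose
        map_add' := fun A B => Matrix.transpose_add A B
        map_smul' := fun c A => Matrix.transpose_smul c A }
  exact e.hasFDerivAt.comp_hasDerivAt t hf

/-- If `k(t)` solves `k' = M(k·Λ·kᵀ)·k` with `Λ` symmetric, then `L(t) = k(t)·Λ·k(t)ᵀ`
solves the full symmetric Toda equation `L' = ⁅M(L), L⁆`. -/
theorem toda_flow_from_group {n : ℕ} (Λ : Matrix (Fin n) (Fin n) ℝ) (hΛ : Λᵀ = Λ)
    (k : ℝ → Matrix (Fin n) (Fin n) ℝ)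
    (hk : ∀ t, HasDerivAt k (todaProj (k t * Λ * (k t)ᵀ) * k t) t) :
    ∀ t, HasDerivAt (fun t => k t * Λ * (k t)ᵀ)
      (todaProj (k t * Λ * (k t)ᵀ) * (k t * Λ * (k t)ᵀ)
        - (k t * Λ * (k t)ᵀ) * todaProj (k t * Λ * (k t)ᵀ)) t := by
  intro t
  set L := k t * Λ * (k t)ᵀ with hL
  set Mk := todaProj L with hM
  have h1 : HasDerivAt (fun t => k t * Λ) (Mk * k t * Λ + k t * 0) t :=
    hasDerivAt_matmul (hk t) (hasDerivAt_const t Λ)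
  have h2 : HasDerivAt (fun t => (k t)ᵀ) ((Mk * k t)ᵀ) t :=
    hasDerivAt_transpose (hk t)
  have h3 := hasDerivAt_matmul h1 h2
  have key : (Mk * k t * Λ + k t * 0) * (k t)ᵀ + k t * Λ * (Mk * k t)ᵀ = Mk * L - L * Mk := by
    rw [hM, transpose_mul, todaProj_skew, ← hM]
    simp only [hL, Matrix.mul_zero, add_zero, Matrix.mul_neg, Matrix.mul_assoc,
      sub_eq_add_neg]
  rw [key] at h3
  exact h3
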